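/- (Laplace smoothing certificate, one-dimensional) Let ε₀ ~ Laplace(0, b) with scale b > 0 and ε₁ = α + ε₀ for α ∈ ℝ. Let h : X → [0,1]^C be measurable, φ a transform, g^ε(x) = E[h(φ(x,ε))], and suppose g^{ε₀}(x)_{k_A} ≥ p_A ≥ p_B ≥ max_{k ≠ k_A} g^{ε₀}(x)_k with p_A > 1/2 and p_B < 1/2. If |α| < −b·log(1 − p_A + p_B), then g^{ε₁}(x)_{k_A} > max_{k ≠ k_A} g^{ε₁}(x)_k. -/

import Mathlib

open MeasureTheory Real Set
open scoped ENNReal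

/-- The Laplace distribution with mean `0` and scale `b`, as a measure on `ℝ`. -/
noncomputable def laplaceMeas (b : ℝ) : Measure ℝ :=
  volume.withDensity fun z => ENNReal.ofReal ((1 / (2 * b)) * Real.exp (-|z| / b))

lemma lap_integrable {b : ℝ} (hb : 0 < b) :
    Integrable (fun z : ℝ => Real.exp (-|z| / b)) := by
  have h1 : IntegrableOn (fun z : ℝ => Real.exp (-|z| / b)) (Ioi 0) := by
    refine (exp_neg_integrableOn_Ioi 0 (inv_pos.2 hb)).congr_fun (fun z hz => ?_)
      measurableSet_Ioi
    rw [abs_of_pos hz]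
    ring_nf
  have h2 : IntegrableOn (fun z : ℝ => Real.exp (-|z| / b)) (Iic 0) := by
    rw [IntegrableOn, ← Measure.map_neg_eq_self (volume : Measure ℝ)]
    have m : MeasurableEmbedding fun x : ℝ => -x :=
      (Homeomorph.neg ℝ).measurableEmbedding
    rw [Measure.restrict_map m.measurable measurableSet_Iic,
      m.integrable_map_iff]
    simp only [Function.comp_def, abs_neg, neg_preimage, neg_Iic, neg_zero]
    exact (integrableOn_Ici_iff_integrableOn_Ioi).mpr h1
  have := integrableOn_union.mpr ⟨h2, h1⟩
  rwa [Iic_union_Ioi, integrableOn_univ] at this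

lemma lap_mass {b : ℝ} (hb : 0 < b) :
    ∫ z : ℝ, (1 / (2 * b)) * Real.exp (-|z| / b) = 1 := by
  rw [integral_const_mul]
  have h1 : ∫ z : ℝ, Real.exp (-|z| / b) = 2 * ∫ z in Ioi (0 : ℝ), Real.exp (-z / b) :=
    integral_comp_abs (f := fun z => Real.exp (-z / b))
  have h2 : ∫ z in Ioi (0 : ℝ), Real.exp (-z / b) = b := by
    have h3 := integral_comp_mul_right_Ioi (fun u => Real.exp (-u)) 0 (inv_pos.2 hb)
    simp only [zero_mul, inv_inv, smul_eq_mul, integral_exp_neg_Ioi, neg_zero,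
      Real.exp_zero, mul_one] at h3
    calc ∫ z in Ioi (0 : ℝ), Real.exp (-z / b)
        = ∫ z in Ioi (0 : ℝ), Real.exp (-(z * b⁻¹)) := by
          congr 1 with z
          rw [div_eq_mul_inv, neg_mul]
      _ = b := h3
  rw [h1, h2]
  field_simp

lemma lap_prob {b : ℝ} (hb : 0 < b) : IsProbabilityMeasure (laplaceMeas b) := by
  constructor
  rw [laplaceMeas, withDensity_apply _ MeasurableSet.univ, Measure.restrict_univ]
  have hnn : (0 : ℝ → ℝ) ≤ᵐ[volume] fun z : ℝ => (1 / (2 * b)) * Real.exp (-|z| / b) := by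
    filter_upwards with z
    positivity
  rw [← ofReal_integral_eq_lintegral_ofReal ((lap_integrable hb).const_mul _) hnn,
    lap_mass hb, ENNReal.ofReal_one]

lemma lap_density_meas (b : ℝ) :
    Measurable fun z : ℝ => ENNReal.ofReal ((1 / (2 * b)) * Real.exp (-|z| / b)) := by
  apply Measurable.ennreal_ofReal
  exact measurable_const.mul ((continuous_abs.measurable.neg.div_const b).exp)

lemma lap_key {b : ℝ} (hb : 0 < b) (α : ℝ) (f : ℝ → ℝ)
    (hf : Measurable f) (h0 : ∀ z, 0 ≤ f z) (h1 : ∀ z, f z ≤ 1) :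
    ∫ z, f (α + z) ∂(laplaceMeas b) ≤
      Real.exp (|α| / b) * ∫ z, f z ∂(laplaceMeas b) := by
  set ρ : ℝ → ℝ≥0∞ := fun z => ENNReal.ofReal ((1 / (2 * b)) * Real.exp (-|z| / b)) with hρ
  have hρm : Measurable ρ := lap_density_meas b
  have hμ := lap_prob hb
  -- rewrite both integrals as lintegrals over volume
  have repr : ∀ g : ℝ → ℝ, Measurable g → (∀ z, 0 ≤ g z) →
      ∫ z, g z ∂(laplaceMeas b) = (∫⁻ z, ENNReal.ofReal (g z) * ρ z ∂volume).toReal := by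
    intro g hg hg0
    rw [integral_eq_lintegral_of_nonneg_ae (Filter.Eventually.of_forall hg0)
      (hg.aestronglyMeasurable)]
    rw [laplaceMeas, lintegral_withDensity_eq_lintegral_mul _ hρm hg.ennreal_ofReal]
    congr 1
    exact lintegral_congr fun z => by simp [Pi.mul_apply, mul_comm]
  have hfa : Measurable fun z => f (α + z) := hf.comp (measurable_const.add measurable_id)
  rw [repr _ hfa (fun z => h0 _), repr _ hf h0]
  set I₀ := ∫⁻ z, ENNReal.ofReal (f z) * ρ z ∂volume with hI₀
  set I₁ := ∫⁻ z, ENNReal.ofReal (f (α + z)) * ρ z ∂volume with hI₁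
  have hmass : ∫⁻ z, ρ z ∂volume = 1 := by
    have := hμ.measure_univ
    rwa [laplaceMeas, withDensity_apply _ MeasurableSet.univ, Measure.restrict_univ] at this
  have hI₀fin : I₀ ≤ 1 := by
    rw [← hmass]
    refine lintegral_mono fun z => ?_
    calc ENNReal.ofReal (f z) * ρ z ≤ 1 * ρ z := by
          gcongr
          exact ENNReal.ofReal_le_one.mpr (h1 z)
      _ = ρ z := one_mul _
  -- translate
  have htrans : I₁ = ∫⁻ u, ENNReal.ofReal (f u) * ρ (u - α) ∂volume := by
    rw [hI₁]
    have := lintegral_add_left_eq_self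
      (fun u => ENNReal.ofReal (f u) * ρ (u - α)) α (μ := volume)
    rw [← this]
    refine lintegral_congr fun z => ?_
    congr 2
    ring
  have hpt : ∀ u : ℝ, ρ (u - α) ≤ ENNReal.ofReal (Real.exp (|α| / b)) * ρ u := by
    intro u
    rw [hρ, ← ENNReal.ofReal_mul (Real.exp_nonneg _)]
    apply ENNReal.ofReal_le_ofReal
    rw [mul_left_comm]
    have hexp : Real.exp (-|u - α| / b) ≤ Real.exp (|α| / b) * Real.exp (-|u| / b) := by
      rw [← Real.exp_add]
      apply Real.exp_le_exp.mpr
      rw [← add_div]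
      have habs : |u| - |α| ≤ |u - α| := abs_sub_abs_le_abs_sub u α
      gcongr
      linarith
    have hpos : (0:ℝ) ≤ 1 / (2 * b) := by positivity
    calc (1 / (2 * b)) * Real.exp (-|u - α| / b)
        ≤ (1 / (2 * b)) * (Real.exp (|α| / b) * Real.exp (-|u| / b)) := by
          exact mul_le_mul_of_nonneg_left hexp hpos
      _ = _ := by ring
  have hle : I₁ ≤ ENNReal.ofReal (Real.exp (|α| / b)) * I₀ := by
    rw [htrans, hI₀, ← lintegral_const_mul _ (f := fun u => ENNReal.ofReal (f u) * ρ u) (hf.ennreal_ofReal.mul hρm)]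
    refine lintegral_mono fun u => ?_
    calc ENNReal.ofReal (f u) * ρ (u - α)
        ≤ ENNReal.ofReal (f u) * (ENNReal.ofReal (Real.exp (|α| / b)) * ρ u) := by
          gcongr; exact hpt u
      _ = ENNReal.ofReal (Real.exp (|α| / b)) * (ENNReal.ofReal (f u) * ρ u) := by ring
  have hfin : ENNReal.ofReal (Real.exp (|α| / b)) * I₀ ≠ ⊤ :=
    ENNReal.mul_ne_top ENNReal.ofReal_ne_top (lt_of_le_of_lt hI₀fin ENNReal.one_lt_top).ne
  calc I₁.toReal ≤ (ENNReal.ofReal (Real.exp (|α| / b)) * I₀).toReal :=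
        ENNReal.toReal_mono hfin hle
    _ = Real.exp (|α| / b) * I₀.toReal := by
        rw [ENNReal.toReal_mul, ENNReal.toReal_ofReal (Real.exp_nonneg _)]

/-- Laplace smoothing certificate (one-dimensional). -/
theorem stmt_9 {X : Type*} [MeasurableSpace X] {C : ℕ} (hC : 2 ≤ C)
    (b : ℝ) (hb : 0 < b)
    (h : X → Fin C → ℝ) (hhb : ∀ y k, h y k ∈ Set.Icc (0 : ℝ) 1)
    (φ : X → ℝ → X) (x : X) (α : ℝ)
    (hmeas : ∀ k, Measurable fun z : ℝ => h (φ x z) k)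
    (g₀ g₁ : Fin C → ℝ)
    (hg₀ : g₀ = fun k => ∫ z, h (φ x z) k ∂(laplaceMeas b))
    (hg₁ : g₁ = fun k => ∫ z, h (φ x (α + z)) k ∂(laplaceMeas b))
    (kA : Fin C) (pA pB : ℝ)
    (hpB0 : 0 ≤ pB) (hpA1 : pA ≤ 1) (hAB : pB ≤ pA)
    (hpA : 1 / 2 < pA) (hpB : pB < 1 / 2)
    (hconfA : pA ≤ g₀ kA) (hconfB : ∀ k, k ≠ kA → g₀ k ≤ pB)
    (hrad : |α| < -(b * Real.log (1 - pA + pB))) :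
    ∀ k, k ≠ kA → g₁ k < g₁ kA := by
  have hμ := lap_prob hb
  set q : ℝ := 1 - pA + pB with hq
  have hq0 : 0 ≤ q := by simp only [hq]; linarith
  have hqpos : 0 < q := by
    rcases lt_or_eq_of_le hq0 with h' | h'
    · exact h'
    · exfalso
      rw [← h', Real.log_zero, mul_zero, neg_zero] at hrad
      exact absurd hrad (not_lt.mpr (abs_nonneg α))
  set E : ℝ := Real.exp (|α| / b) with hE
  have hE1 : E * q < 1 := by
    have hc : |α| / b < -Real.log q := by
      rw [div_lt_iff₀ hb]
      calc |α| < -(b * Real.log q) := hrad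
        _ = -Real.log q * b := by ring
    have hlt : E < q⁻¹ := by
      calc E < Real.exp (-Real.log q) := Real.exp_lt_exp.mpr hc
        _ = q⁻¹ := by rw [Real.exp_neg, Real.exp_log hqpos]
    calc E * q < q⁻¹ * q := mul_lt_mul_of_pos_right hlt hqpos
      _ = 1 := inv_mul_cancel₀ hqpos.ne'
  have hEpos : (0 : ℝ) < E := Real.exp_pos _
  have hint : ∀ F : ℝ → ℝ, Measurable F → (∀ z, 0 ≤ F z) → (∀ z, F z ≤ 1) →
      Integrable F (laplaceMeas b) := by
    intro F hF h0 h1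
    refine (integrable_const (1 : ℝ)).mono' hF.aestronglyMeasurable
      (Filter.Eventually.of_forall fun z => ?_)
    rw [Real.norm_eq_abs, abs_of_nonneg (h0 z)]
    exact h1 z
  intro k hk
  -- bound for k
  have hbk : g₁ k ≤ E * g₀ k := by
    rw [hg₀, hg₁]
    exact lap_key hb α (fun z => h (φ x z) k) (hmeas k)
      (fun z => (hhb _ k).1) (fun z => (hhb _ k).2)
  -- bound for kA
  have hbA : 1 - g₁ kA ≤ E * (1 - g₀ kA) := by
    have hfa : Measurable fun z : ℝ => h (φ x (α + z)) kA :=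
      (hmeas kA).comp (measurable_const.add measurable_id)
    have key := lap_key hb α (fun z => 1 - h (φ x z) kA)
      (measurable_const.sub (hmeas kA))
      (fun z => by
        show (0 : ℝ) ≤ 1 - h (φ x z) kA
        linarith [(hhb (φ x z) kA).2])
      (fun z => by
        show 1 - h (φ x z) kA ≤ 1
        linarith [(hhb (φ x z) kA).1])
    have e1 : ∫ z, (1 - h (φ x (α + z)) kA) ∂(laplaceMeas b) = 1 - g₁ kA := by
      rw [integral_sub (integrable_const 1)
        (hint _ hfa (fun z => (hhb _ kA).1) (fun z => (hhb _ kA).2))]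
      simp [hg₁]
    have e2 : ∫ z, (1 - h (φ x z) kA) ∂(laplaceMeas b) = 1 - g₀ kA := by
      rw [integral_sub (integrable_const 1)
        (hint _ (hmeas kA) (fun z => (hhb _ kA).1) (fun z => (hhb _ kA).2))]
      simp [hg₀]
    rw [e1, e2] at key
    exact key
  have t1 : E * g₀ k ≤ E * pB := mul_le_mul_of_nonneg_left (hconfB k hk) hEpos.le
  have t2 : E * (1 - g₀ kA) ≤ E * (1 - pA) := by
    apply mul_le_mul_of_nonneg_left _ hEpos.le
    linarith
  have hsum : E * (1 - pA) + E * pB = E * q := by rw [hq]; ring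
  linarith
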